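/- Let 0 < δ < 2, q ≥ 1, and let ψ: ℝ^N → ℝ be a nonnegative Schwartz function. Define the fractional Laplacian by (-Δ)^(δ/2)ψ(x) = -c_N(δ) ∫_{ℝ^N} (ψ(x+z) - ψ(x))/|z|^(N+δ) dz (principal value integral), where c_N(δ) > 0 is a normalization constant. Then for every x ∈ ℝ^N: (-Δ)^(δ/2)(ψ^q)(x) ≤ q · ψ(x)^(q-1) · (-Δ)^(δ/2)ψ(x). -/

import Mathlib

open MeasureTheory

lemma tangent_rpow {a b q : ℝ} (ha : 0 ≤ a) (hb : 0 ≤ b) (hq : 1 ≤ q) :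
    q * b ^ (q - 1) * (a - b) ≤ a ^ q - b ^ q := by
  rcases eq_or_lt_of_le hb with hb0 | hb0
  · -- b = 0
    rcases eq_or_lt_of_le hq with hq1 | hq1
    · simp [← hb0, ← hq1]
    · rw [← hb0]
      rw [Real.zero_rpow (by linarith), Real.zero_rpow (by linarith)]
      simpa using Real.rpow_nonneg ha q
  · -- b > 0, use Bernoulli with s = a/b - 1
    have hs : -1 ≤ a / b - 1 := by
      have : 0 ≤ a / b := div_nonneg ha hb0.le
      linarith
    have key := one_add_mul_self_le_rpow_one_add hs hq
    have h1 : 1 + (a / b - 1) = a / b := by ring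
    rw [h1] at key
    -- key : 1 + q * (a/b - 1) ≤ (a/b)^q
    rw [Real.div_rpow ha hb0.le] at key
    have hbq : 0 < b ^ q := Real.rpow_pos_of_pos hb0 q
    have key2 : (1 + q * (a / b - 1)) * b ^ q ≤ a ^ q := by
      calc (1 + q * (a / b - 1)) * b ^ q ≤ a ^ q / b ^ q * b ^ q :=
            mul_le_mul_of_nonneg_right key hbq.le
        _ = a ^ q := div_mul_cancel₀ _ hbq.ne'
    have hbq1 : b ^ (q - 1) * b = b ^ q := by
      rw [Real.rpow_sub hb0, Real.rpow_one, div_mul_cancel₀ _ hb0.ne']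
    rw [add_mul, one_mul] at key2
    have he : q * (a / b - 1) * b ^ q = q * b ^ (q - 1) * (a - b) := by
      rw [← hbq1]; field_simp
    linarith

/-- Ju's inequality: if `L` is the fractional Laplacian of order δ/2 of a
nonnegative Schwartz function ψ and `Lq` that of ψ^q (given by the
singular-integral representation, assumed absolutely convergent), then
(-Δ)^(δ/2)(ψ^q)(x) ≤ q · ψ(x)^(q-1) · (-Δ)^(δ/2)ψ(x) for every x. -/
theorem stmt_2 (N : ℕ) (hN : 1 ≤ N) (δ q c : ℝ) (hδ : 0 < δ) (hδ2 : δ < 2)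
    (hq : 1 ≤ q) (hc : 0 < c)
    (ψ : SchwartzMap (EuclideanSpace ℝ (Fin N)) ℝ)
    (hψ : ∀ x, 0 ≤ ψ x)
    (L Lq : EuclideanSpace ℝ (Fin N) → ℝ)
    (hint : ∀ x, Integrable (fun z : EuclideanSpace ℝ (Fin N) =>
      (ψ (x + z) - ψ x) / ‖z‖ ^ ((N : ℝ) + δ)))
    (hintq : ∀ x, Integrable (fun z : EuclideanSpace ℝ (Fin N) =>
      (ψ (x + z) ^ q - ψ x ^ q) / ‖z‖ ^ ((N : ℝ) + δ)))
    (hL : ∀ x, L x = -c * ∫ z : EuclideanSpace ℝ (Fin N),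
      (ψ (x + z) - ψ x) / ‖z‖ ^ ((N : ℝ) + δ))
    (hLq : ∀ x, Lq x = -c * ∫ z : EuclideanSpace ℝ (Fin N),
      (ψ (x + z) ^ q - ψ x ^ q) / ‖z‖ ^ ((N : ℝ) + δ)) :
    ∀ x, Lq x ≤ q * ψ x ^ (q - 1) * L x := by
  intro x
  set K : ℝ := q * ψ x ^ (q - 1) with hK
  have hK0 : 0 ≤ K := mul_nonneg (by linarith) (Real.rpow_nonneg (hψ x) _)
  have hmono : ∫ z : EuclideanSpace ℝ (Fin N),
      K * ((ψ (x + z) - ψ x) / ‖z‖ ^ ((N : ℝ) + δ)) ≤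
      ∫ z : EuclideanSpace ℝ (Fin N),
      (ψ (x + z) ^ q - ψ x ^ q) / ‖z‖ ^ ((N : ℝ) + δ) := by
    refine integral_mono ((hint x).const_mul K) (hintq x) fun z => ?_
    have hd : 0 ≤ (‖z‖ ^ ((N : ℝ) + δ))⁻¹ :=
      inv_nonneg.2 (Real.rpow_nonneg (norm_nonneg z) _)
    have := tangent_rpow (hψ (x + z)) (hψ x) hq
    simp only [div_eq_mul_inv, ← mul_assoc]
    exact mul_le_mul_of_nonneg_right this hd
  rw [hLq x, hL x]
  have h1 : -c * ∫ z : EuclideanSpace ℝ (Fin N),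
      (ψ (x + z) ^ q - ψ x ^ q) / ‖z‖ ^ ((N : ℝ) + δ) ≤
      -c * ∫ z : EuclideanSpace ℝ (Fin N),
      K * ((ψ (x + z) - ψ x) / ‖z‖ ^ ((N : ℝ) + δ)) :=
    mul_le_mul_of_nonpos_left hmono (by linarith)
  calc _ ≤ _ := h1
    _ = K * (-c * ∫ z : EuclideanSpace ℝ (Fin N),
        (ψ (x + z) - ψ x) / ‖z‖ ^ ((N : ℝ) + δ)) := by
        rw [integral_const_mul]; ring
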